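/- Let b_H, d_M, β_MH, β_HM, γ_H, γ_M, σ_H, K*, H be positive reals. Let F be the 4×4 complex matrix whose only nonzero entries are F₁₄ = β_MH and F₃₂ = (β_HM/H)·K*, and let V be the 4×4 complex matrix with diagonal entries (γ_H+b_H, σ_H+b_H, γ_M+d_M, d_M), subdiagonal entries V₂₁ = −γ_H and V₄₃ = −γ_M, and all other entries zero. Then V is invertible, and the spectral radius of F·V⁻¹ equals √(β_HM β_MH K* γ_M γ_H / (H d_M (b_H+σ_H)(γ_M+d_M)(γ_H+b_H))). -/

import Mathlib

open Matrix



lemma aux_detV (p q s d g m : ℂ) :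
    Matrix.det !![p, 0, 0, 0; -g, q, 0, 0; 0, 0, s, 0; 0, 0, -m, d] = p * q * (s * d) := by
  simp [Matrix.det_succ_row_zero, Fin.sum_univ_succ, Fin.succAbove,
    Fin.castSucc, Fin.castAdd, Fin.castLE]
  ring

lemma aux_mul_inv (p q s d g m e k : ℂ) (hp : p ≠ 0) (hq : q ≠ 0) (hs : s ≠ 0) (hd : d ≠ 0) :
    !![0, 0, 0, e; 0, 0, 0, 0; 0, k, 0, 0; 0, 0, 0, 0] *
      (!![p, 0, 0, 0; -g, q, 0, 0; 0, 0, s, 0; 0, 0, -m, d])⁻¹ =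
    !![0, 0, e * m / (s * d), e / d; 0, 0, 0, 0;
       k * g / (p * q), k / q, 0, 0; 0, 0, 0, 0] := by
  have hinv : (!![p, 0, 0, 0; -g, q, 0, 0; 0, 0, s, 0; 0, 0, -m, d])⁻¹ =
      !![1/p, 0, 0, 0; g/(p*q), 1/q, 0, 0; 0, 0, 1/s, 0; 0, 0, m/(s*d), 1/d] := by
    apply Matrix.inv_eq_right_inv
    ext i j
    fin_cases i <;> fin_cases j <;>
      simp [Matrix.mul_apply, Fin.sum_univ_four, Matrix.one_apply,
        Matrix.vecHead, Matrix.vecTail] <;>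
      field_simp <;> ring
  rw [hinv]
  ext i j
  fin_cases i <;> fin_cases j <;>
    simp [Matrix.mul_apply, Fin.sum_univ_four, Matrix.vecHead, Matrix.vecTail] <;>
    ring

lemma aux_det4 (μ a e b c : ℂ) :
    (algebraMap ℂ (Matrix (Fin 4) (Fin 4) ℂ) μ -
      !![0, 0, a, e; 0, 0, 0, 0; b, c, 0, 0; 0, 0, 0, 0]).det = μ^2 * (μ^2 - a*b) := by
  have hmat : algebraMap ℂ (Matrix (Fin 4) (Fin 4) ℂ) μ -
      !![0, 0, a, e; 0, 0, 0, 0; b, c, 0, 0; 0, 0, 0, 0] =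
      !![μ, 0, -a, -e; 0, μ, 0, 0; -b, -c, μ, 0; 0, 0, 0, μ] := by
    ext i j
    fin_cases i <;> fin_cases j <;>
      simp [Matrix.algebraMap_matrix_apply, Matrix.sub_apply,
        Matrix.vecHead, Matrix.vecTail]
  rw [hmat]
  simp [Matrix.det_succ_row_zero, Fin.sum_univ_succ, Fin.succAbove,
    Fin.castSucc, Fin.castAdd, Fin.castLE]
  ring

lemma aux_spectrum (a e b c r : ℂ) (hr : r ^ 2 = a * b) :
    spectrum ℂ !![0, 0, a, e; 0, 0, 0, 0; b, c, 0, 0; 0, 0, 0, 0] = {0, r, -r} := by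
  ext μ
  rw [spectrum.mem_iff, Matrix.isUnit_iff_isUnit_det, isUnit_iff_ne_zero, not_ne_iff,
    aux_det4]
  have h : μ ^ 2 * (μ ^ 2 - a * b) = μ ^ 2 * ((μ - r) * (μ + r)) := by
    rw [← hr]; ring
  rw [h]
  simp only [Set.mem_insert_iff, Set.mem_singleton_iff, mul_eq_zero,
    pow_eq_zero_iff (two_ne_zero), sub_eq_zero, add_eq_zero_iff_eq_neg]

lemma aux_spectralRadius {A : Matrix (Fin 4) (Fin 4) ℂ} {r : ℝ} (hr : 0 ≤ r)
    (h : spectrum ℂ A = {0, (r : ℂ), (-r : ℂ)}) :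
    spectralRadius ℂ A = ENNReal.ofReal r := by
  rw [spectralRadius, h]
  rw [show ({0, (r:ℂ), (-r:ℂ)} : Set ℂ) = insert 0 (insert (r:ℂ) {(-r:ℂ)}) from rfl]
  rw [iSup_insert, iSup_insert, iSup_singleton]
  simp only [nnnorm_zero, nnnorm_neg, Complex.nnnorm_real]
  rw [ENNReal.ofReal, Real.toNNReal_of_nonneg hr]
  simp [Real.nnnorm_of_nonneg hr, NNReal.coe_mk]


/-- next-generation matrix computation of `R₀^M` for the SEIR–SEI
model: `V` is invertible and the spectral radius of `F·V⁻¹` equals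
`√(β_HM β_MH K* γ_M γ_H / (H d_M (b_H+σ_H)(γ_M+d_M)(γ_H+b_H)))`. -/
theorem spectralRadius_next_generation_SEIR
    (bH dM βMH βHM γH γM σH Kstar H : ℝ)
    (hbH : 0 < bH) (hdM : 0 < dM) (hβMH : 0 < βMH) (hβHM : 0 < βHM)
    (hγH : 0 < γH) (hγM : 0 < γM) (hσH : 0 < σH) (hK : 0 < Kstar) (hH : 0 < H) :
    let F : Matrix (Fin 4) (Fin 4) ℂ :=
      !![0, 0, 0, (βMH : ℂ);
         0, 0, 0, 0;
         0, ((βHM : ℂ) / (H : ℂ)) * (Kstar : ℂ), 0, 0;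
         0, 0, 0, 0]
    let V : Matrix (Fin 4) (Fin 4) ℂ :=
      !![(γH : ℂ) + (bH : ℂ), 0, 0, 0;
         -(γH : ℂ), (σH : ℂ) + (bH : ℂ), 0, 0;
         0, 0, (γM : ℂ) + (dM : ℂ), 0;
         0, 0, -(γM : ℂ), (dM : ℂ)]
    IsUnit V ∧
      spectralRadius ℂ (F * V⁻¹) =
        ENNReal.ofReal (Real.sqrt (βHM * βMH * Kstar * γM * γH /
          (H * dM * (bH + σH) * (γM + dM) * (γH + bH)))) := by
  intro F V
  have hp : ((γH : ℂ) + bH) ≠ 0 := by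
    intro h; have := congrArg Complex.re h; simp at this; nlinarith
  have hq : ((σH : ℂ) + bH) ≠ 0 := by
    intro h; have := congrArg Complex.re h; simp at this; nlinarith
  have hs : ((γM : ℂ) + dM) ≠ 0 := by
    intro h; have := congrArg Complex.re h; simp at this; nlinarith
  have hd : ((dM : ℂ)) ≠ 0 := by simpa using hdM.ne'
  have hVunit : IsUnit V := by
    rw [Matrix.isUnit_iff_isUnit_det]
    rw [show V.det = ((γH:ℂ)+bH) * ((σH:ℂ)+bH) * (((γM:ℂ)+dM) * dM) from
      aux_detV _ _ _ _ _ _]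
    exact isUnit_iff_ne_zero.2 (mul_ne_zero (mul_ne_zero hp hq) (mul_ne_zero hs hd))
  refine ⟨hVunit, ?_⟩
  have hM : F * V⁻¹ =
      !![0, 0, (βMH : ℂ) * γM / (((γM:ℂ)+dM) * dM), (βMH : ℂ) / dM;
         0, 0, 0, 0;
         ((βHM:ℂ)/H*Kstar) * γH / (((γH:ℂ)+bH) * ((σH:ℂ)+bH)), ((βHM:ℂ)/H*Kstar) / ((σH:ℂ)+bH), 0, 0;
         0, 0, 0, 0] :=
    aux_mul_inv _ _ _ _ _ _ _ _ hp hq hs hd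
  set P : ℝ := βHM * βMH * Kstar * γM * γH /
      (H * dM * (bH + σH) * (γM + dM) * (γH + bH)) with hP
  have hPnonneg : 0 ≤ P := by rw [hP]; positivity
  have hH' : (H : ℂ) ≠ 0 := by simpa using hH.ne'
  have hr2 : ((Real.sqrt P : ℂ)) ^ 2 =
      (βMH : ℂ) * γM / (((γM:ℂ)+dM) * dM) *
        (((βHM:ℂ)/H*Kstar) * γH / (((γH:ℂ)+bH) * ((σH:ℂ)+bH))) := by
    have h1 : ((Real.sqrt P : ℂ)) ^ 2 = (P : ℂ) := by
      norm_cast; exact Real.sq_sqrt hPnonneg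
    rw [h1, hP]
    have hreal : βHM * βMH * Kstar * γM * γH /
        (H * dM * (bH + σH) * (γM + dM) * (γH + bH)) =
        βMH * γM / ((γM + dM) * dM) * (βHM / H * Kstar * γH / ((γH + bH) * (σH + bH))) := by
      have h1 : γM + dM ≠ 0 := by positivity
      have h2 : γH + bH ≠ 0 := by positivity
      have h3 : σH + bH ≠ 0 := by positivity
      have h4 : bH + σH ≠ 0 := by positivity
      field_simp
      ring
    rw [hreal]
    push_cast
    ring
  rw [hM, aux_spectralRadius (Real.sqrt_nonneg P)
    (aux_spectrum _ _ _ _ _ hr2)]
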